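/- Let n ≥ 6 and let i be an integer with ⌈n/3⌉ ≤ i ≤ ⌊n/2⌋. Then the number of accurate dominating sets of the path P_n of cardinality i satisfies d_a(P_n, i) ≥ Σ_{k=3}^{i} d(P_{n−k}, i−k+1) + Σ_{k=5}^{i+1} d(P_{n−k}, i−k+2) (a sum over an empty index range is 0). -/

import Mathlib

/-- `D` is a dominating set of the simple graph `G`: every vertex not in `D`
is adjacent to at least one vertex in `D`. -/
def IsDomSet {V : Type*} (G : SimpleGraph V) (D : Finset V) : Prop :=
  ∀ v : V, v ∉ D → ∃ u ∈ D, G.Adj u v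

/-- `D` is an accurate dominating set of `G`: a dominating set such that no subset of
`V \ D` of cardinality `|D|` is a dominating set of `G`. -/
def IsAccDomSet {V : Type*} (G : SimpleGraph V) (D : Finset V) : Prop :=
  IsDomSet G D ∧
    ∀ E : Finset V, (∀ v ∈ E, v ∉ D) → E.card = D.card → ¬ IsDomSet G E

/-- The domination number of `G`: the minimum cardinality of a dominating set. -/
noncomputable def domNum {V : Type*} (G : SimpleGraph V) : ℕ :=
  sInf {k | ∃ D : Finset V, IsDomSet G D ∧ D.card = k}

/-- The accurate domination number of `G`: the minimum cardinality of an accurate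
dominating set. -/
noncomputable def accDomNum {V : Type*} (G : SimpleGraph V) : ℕ :=
  sInf {k | ∃ D : Finset V, IsAccDomSet G D ∧ D.card = k}

/-- `d(G,i)`: the number of dominating sets of `G` of cardinality `i`. -/
noncomputable def numDomSets {V : Type*} (G : SimpleGraph V) (i : ℕ) : ℕ :=
  Set.ncard {D : Finset V | IsDomSet G D ∧ D.card = i}

/-- `d_a(G,i)`: the number of accurate dominating sets of `G` of cardinality `i`. -/
noncomputable def numAccDomSets {V : Type*} (G : SimpleGraph V) (i : ℕ) : ℕ :=
  Set.ncard {D : Finset V | IsAccDomSet G D ∧ D.card = i}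

open Finset SimpleGraph

def shiftEmb (n k : ℕ) : Fin (n - k) ↪ Fin n :=
  ⟨fun v => ⟨v.val + k, by have := v.isLt; omega⟩, by
    intro a b hab
    rw [Fin.ext_iff] at hab ⊢
    simpa using hab⟩

def famSet (n k a : ℕ) (D' : Finset (Fin (n - k))) : Finset (Fin n) :=
  Finset.attachFin ((Finset.Ico a (k-1)).filter (· < n))
    (fun m hm => (Finset.mem_filter.mp hm).2) ∪ D'.map (shiftEmb n k)

lemma mem_famSet {n k a : ℕ} {D' : Finset (Fin (n-k))} {v : Fin n} :
    v ∈ famSet n k a D' ↔ (a ≤ v.val ∧ v.val < k - 1) ∨ ∃ x ∈ D', (x : ℕ) + k = v.val := by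
  have hv := v.isLt
  simp [famSet, Finset.mem_attachFin, Finset.mem_map, shiftEmb, Fin.ext_iff, hv, and_assoc]
  rfl

lemma famSet_card {n k a : ℕ} {D' : Finset (Fin (n-k))} (ha : a ≤ k - 1) (hk : k - 1 ≤ n) :
    (famSet n k a D').card = (k - 1 - a) + D'.card := by
  rw [famSet, Finset.card_union_of_disjoint, Finset.card_attachFin, Finset.card_map,
    Finset.filter_true_of_mem, Nat.card_Ico]
  · intro m hm
    rw [Finset.mem_Ico] at hm
    omega
  · rw [Finset.disjoint_left]
    intro v hv hv'
    rw [Finset.mem_attachFin, Finset.mem_filter, Finset.mem_Ico] at hv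
    rw [Finset.mem_map] at hv'
    obtain ⟨x, _, hx⟩ := hv'
    have : (x : ℕ) + k = v.val := by rw [← hx]; rfl
    omega

lemma famSet_injective {n k a : ℕ} : Function.Injective (famSet n k a) := by
  intro D₁ D₂ h
  ext x
  have hx := x.isLt
  have h1 : shiftEmb n k x ∈ famSet n k a D₁ ↔ shiftEmb n k x ∈ famSet n k a D₂ := by rw [h]
  rw [mem_famSet, mem_famSet] at h1
  have hval : ((shiftEmb n k x : Fin n) : ℕ) = x.val + k := rfl
  constructor
  · intro hx1
    have := h1.mp (Or.inr ⟨x, hx1, hval.symm⟩)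
    rcases this with h2 | ⟨y, hy, hyk⟩
    · omega
    · rw [hval] at hyk
      have : y = x := by rw [Fin.ext_iff]; omega
      rwa [← this]
  · intro hx1
    have := h1.mpr (Or.inr ⟨x, hx1, hval.symm⟩)
    rcases this with h2 | ⟨y, hy, hyk⟩
    · omega
    · rw [hval] at hyk
      have : y = x := by rw [Fin.ext_iff]; omega
      rwa [← this]


lemma famSet_ne_of_lt {n k k' a : ℕ} (hkn : k - 1 < n) (ha : a ≤ k - 1) (hk1 : 1 ≤ k)
    (hk : k < k') {D₁ : Finset (Fin (n-k))} {D₂ : Finset (Fin (n-k'))} :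
    famSet n k a D₁ ≠ famSet n k' a D₂ := by
  intro h
  have h1 : (⟨k-1, hkn⟩ : Fin n) ∈ famSet n k' a D₂ := by
    rw [mem_famSet]
    left
    simp only [Fin.val_mk]
    omega
  rw [← h, mem_famSet] at h1
  simp only [Fin.val_mk] at h1
  rcases h1 with ⟨_, h2⟩ | ⟨x, _, hx⟩ <;> omega

lemma famSet_zero_ne_one {n k k' : ℕ} (hn : 0 < n) (hk : 2 ≤ k) (hk' : 1 ≤ k')
    {D₁ : Finset (Fin (n-k))} {D₂ : Finset (Fin (n-k'))} :
    famSet n k 0 D₁ ≠ famSet n k' 1 D₂ := by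
  intro h
  have h1 : (⟨0, hn⟩ : Fin n) ∈ famSet n k 0 D₁ := by
    rw [mem_famSet]
    left
    simp only [Fin.val_mk]
    omega
  rw [h, mem_famSet] at h1
  simp only [Fin.val_mk] at h1
  rcases h1 with ⟨h2, _⟩ | ⟨x, _, hx⟩ <;> omega

lemma famSet_isDom {n k a : ℕ} (ha : a ≤ 1) (hk3 : 3 ≤ k) (hka : a = 1 → 5 ≤ k)
    (hkn : k + 1 ≤ n) {D' : Finset (Fin (n-k))}
    (hD' : IsDomSet (SimpleGraph.pathGraph (n-k)) D') :
    IsDomSet (SimpleGraph.pathGraph n) (famSet n k a D') := by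
  intro v hv
  rw [mem_famSet] at hv
  push_neg at hv
  obtain ⟨hv1, hv2⟩ := hv
  have hvlt := v.isLt
  by_cases hcase : v.val < k
  · -- v.val = 0 (if a = 1) or v.val = k - 1
    by_cases h0 : v.val < k - 1
    · -- then a = 1 and v.val = 0; neighbor is 1
      have ha1 : a = 1 := by omega
      have hv0 : v.val = 0 := by omega
      have hk5 := hka ha1
      refine ⟨⟨1, by omega⟩, ?_, ?_⟩
      · rw [mem_famSet]
        left
        simp only [Fin.val_mk]
        omega
      · rw [SimpleGraph.pathGraph_adj]
        simp only [Fin.val_mk]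
        omega
    · -- v.val = k - 1; neighbor is k - 2
      refine ⟨⟨k-2, by omega⟩, ?_, ?_⟩
      · rw [mem_famSet]
        left
        simp only [Fin.val_mk]
        omega
      · rw [SimpleGraph.pathGraph_adj]
        simp only [Fin.val_mk]
        omega
  · -- v.val ≥ k: use domination of D'
    push_neg at hcase
    have hx : (⟨v.val - k, by omega⟩ : Fin (n-k)) ∉ D' := fun hmem =>
      hv2 _ hmem (by simp only [Fin.val_mk]; omega)
    obtain ⟨u, hu, hadj⟩ := hD' _ hx
    rw [SimpleGraph.pathGraph_adj] at hadj
    simp only [Fin.val_mk] at hadj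
    refine ⟨⟨u.val + k, by have := u.isLt; omega⟩, ?_, ?_⟩
    · rw [mem_famSet]
      right
      exact ⟨u, hu, rfl⟩
    · rw [SimpleGraph.pathGraph_adj]
      simp only [Fin.val_mk]
      omega

lemma isAcc_of_closed {n : ℕ} {D : Finset (Fin n)} (hD : IsDomSet (SimpleGraph.pathGraph n) D)
    (w : Fin n) (hw : w ∈ D) (hnb : ∀ u : Fin n, (SimpleGraph.pathGraph n).Adj u w → u ∈ D) :
    IsAccDomSet (SimpleGraph.pathGraph n) D := by
  refine ⟨hD, fun E hE _ hdom => ?_⟩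
  by_cases hwE : w ∈ E
  · exact hE w hwE hw
  · obtain ⟨u, hu, hadj⟩ := hdom w hwE
    exact hE u hu (hnb u hadj)

lemma famSet_isAcc {n k a : ℕ} (ha : a ≤ 1) (hk3 : 3 ≤ k) (hka : a = 1 → 5 ≤ k)
    (hkn : k + 1 ≤ n) {D' : Finset (Fin (n-k))}
    (hD' : IsDomSet (SimpleGraph.pathGraph (n-k)) D') :
    IsAccDomSet (SimpleGraph.pathGraph n) (famSet n k a D') := by
  have hdom := famSet_isDom ha hk3 hka hkn hD'
  by_cases ha0 : a = 0
  · subst ha0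
    refine isAcc_of_closed hdom ⟨0, by omega⟩ ?_ ?_
    · rw [mem_famSet]; left; simp only [Fin.val_mk]; omega
    · intro u hadj
      rw [SimpleGraph.pathGraph_adj] at hadj
      simp only [Fin.val_mk] at hadj
      rw [mem_famSet]; left; omega
  · have ha1 : a = 1 := by omega
    subst ha1
    have hk5 := hka rfl
    refine isAcc_of_closed hdom ⟨2, by omega⟩ ?_ ?_
    · rw [mem_famSet]; left; simp only [Fin.val_mk]; omega
    · intro u hadj
      rw [SimpleGraph.pathGraph_adj] at hadj
      simp only [Fin.val_mk] at hadj
      rw [mem_famSet]; left; omega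

open Classical in
lemma ncard_eq_card_filter {α : Type*} [Fintype α] (p : α → Prop) :
    Set.ncard {x | p x} = (Finset.univ.filter p).card := by
  rw [Set.ncard_eq_toFinset_card', Set.toFinset_setOf]

open Classical in
noncomputable def famFinset (n i k a : ℕ) : Finset (Finset (Fin n)) :=
  (Finset.univ.filter (fun D' : Finset (Fin (n-k)) =>
    IsDomSet (SimpleGraph.pathGraph (n-k)) D' ∧ D'.card = i + 1 + a - k)).image (famSet n k a)

lemma famFinset_card (n i k a : ℕ) :
    (famFinset n i k a).card = numDomSets (SimpleGraph.pathGraph (n-k)) (i + 1 + a - k) := by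
  classical
  rw [famFinset, Finset.card_image_of_injective _ famSet_injective, numDomSets,
    ncard_eq_card_filter]
  congr!

lemma mem_famFinset {n i k a : ℕ} {X : Finset (Fin n)} :
    X ∈ famFinset n i k a ↔ ∃ D' : Finset (Fin (n-k)),
      (IsDomSet (SimpleGraph.pathGraph (n-k)) D' ∧ D'.card = i + 1 + a - k) ∧
        famSet n k a D' = X := by
  classical
  simp [famFinset]


/-- Lower bound for the number of accurate dominating sets of the path `P_n` of
cardinality `i`, for `⌈n/3⌉ ≤ i ≤ ⌊n/2⌋`. -/
theorem path_numAccDomSets_lower (n i : ℕ) (hn : 6 ≤ n)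
    (h1 : (n + 2) / 3 ≤ i) (h2 : i ≤ n / 2) :
    (∑ k ∈ Finset.Icc 3 i, numDomSets (SimpleGraph.pathGraph (n - k)) (i + 1 - k)) +
      (∑ k ∈ Finset.Icc 5 (i + 1), numDomSets (SimpleGraph.pathGraph (n - k)) (i + 2 - k)) ≤
    numAccDomSets (SimpleGraph.pathGraph n) i := by
  classical
  set T : Finset (Finset (Fin n)) :=
    Finset.univ.filter (fun D => IsAccDomSet (SimpleGraph.pathGraph n) D ∧ D.card = i) with hT
  have hTcard : numAccDomSets (SimpleGraph.pathGraph n) i = T.card := by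
    rw [numAccDomSets, ncard_eq_card_filter, hT]
    congr!
  set A : Finset (Finset (Fin n)) := (Finset.Icc 3 i).biUnion (fun k => famFinset n i k 0)
    with hA
  set B : Finset (Finset (Fin n)) := (Finset.Icc 5 (i+1)).biUnion (fun k => famFinset n i k 1)
    with hB
  -- disjointness within families
  have hdisj : ∀ a : ℕ, ∀ k ∈ Finset.Icc (3 + 2*a) (i + a), ∀ k' ∈ Finset.Icc (3 + 2*a) (i + a),
      k ≠ k' → Disjoint (famFinset n i k a) (famFinset n i k' a) := by
    intro a k hk k' hk' hne
    rw [Finset.mem_Icc] at hk hk'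
    have hin : i ≤ n / 2 := h2
    rw [Finset.disjoint_left]
    intro X hX hX'
    rw [mem_famFinset] at hX hX'
    obtain ⟨D₁, _, hXe⟩ := hX
    obtain ⟨D₂, _, hXe'⟩ := hX'
    rcases Nat.lt_or_ge k k' with h | h
    · exact famSet_ne_of_lt (by omega) (by omega) (by omega) h (hXe.trans hXe'.symm)
    · have h' : k' < k := by omega
      exact famSet_ne_of_lt (by omega) (by omega) (by omega) h' (hXe'.trans hXe.symm)
  -- card of A and B
  have hAcard : A.card =
      ∑ k ∈ Finset.Icc 3 i, numDomSets (SimpleGraph.pathGraph (n - k)) (i + 1 - k) := by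
    rw [hA, Finset.card_biUnion (by intro k hk k' hk' hne; simpa [Function.onFun] using hdisj 0 k (by simpa using hk) k' (by simpa using hk') hne)]
    refine Finset.sum_congr rfl (fun k hk => ?_)
    rw [Finset.mem_Icc] at hk
    rw [famFinset_card]
  have hBcard : B.card =
      ∑ k ∈ Finset.Icc 5 (i+1), numDomSets (SimpleGraph.pathGraph (n - k)) (i + 2 - k) := by
    rw [hB, Finset.card_biUnion (by intro k hk k' hk' hne; simpa [Function.onFun] using hdisj 1 k (by simpa using hk) k' (by simpa using hk') hne)]
    refine Finset.sum_congr rfl (fun k hk => ?_)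
    rw [Finset.mem_Icc] at hk
    rw [famFinset_card]
  -- A and B disjoint
  have hAB : Disjoint A B := by
    rw [Finset.disjoint_left]
    intro X hX hX'
    rw [hA, Finset.mem_biUnion] at hX
    rw [hB, Finset.mem_biUnion] at hX'
    obtain ⟨k, hk, hXk⟩ := hX
    obtain ⟨k', hk', hXk'⟩ := hX'
    rw [Finset.mem_Icc] at hk hk'
    rw [mem_famFinset] at hXk hXk'
    obtain ⟨D₁, _, hXe⟩ := hXk
    obtain ⟨D₂, _, hXe'⟩ := hXk'
    exact famSet_zero_ne_one (by omega) (by omega) (by omega) (hXe.trans hXe'.symm)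
  -- A ∪ B ⊆ T
  have hsub : A ∪ B ⊆ T := by
    intro X hX
    rw [Finset.mem_union] at hX
    have hXT : IsAccDomSet (SimpleGraph.pathGraph n) X ∧ X.card = i := by
      rcases hX with hX | hX
      · rw [hA, Finset.mem_biUnion] at hX
        obtain ⟨k, hk, hXk⟩ := hX
        rw [Finset.mem_Icc] at hk
        rw [mem_famFinset] at hXk
        obtain ⟨D', ⟨hdom, hcard⟩, rfl⟩ := hXk
        refine ⟨famSet_isAcc (by omega) (by omega) (by omega) (by omega) hdom, ?_⟩
        rw [famSet_card (by omega) (by omega), hcard]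
        omega
      · rw [hB, Finset.mem_biUnion] at hX
        obtain ⟨k, hk, hXk⟩ := hX
        rw [Finset.mem_Icc] at hk
        rw [mem_famFinset] at hXk
        obtain ⟨D', ⟨hdom, hcard⟩, rfl⟩ := hXk
        refine ⟨famSet_isAcc (by omega) (by omega) (by omega) (by omega) hdom, ?_⟩
        rw [famSet_card (by omega) (by omega), hcard]
        omega
    rw [hT, Finset.mem_filter]
    exact ⟨Finset.mem_univ _, hXT⟩
  calc (∑ k ∈ Finset.Icc 3 i, numDomSets (SimpleGraph.pathGraph (n - k)) (i + 1 - k)) +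
      (∑ k ∈ Finset.Icc 5 (i + 1), numDomSets (SimpleGraph.pathGraph (n - k)) (i + 2 - k))
      = A.card + B.card := by rw [hAcard, hBcard]
    _ = (A ∪ B).card := (Finset.card_union_of_disjoint hAB).symm
    _ ≤ T.card := Finset.card_le_card hsub
    _ = numAccDomSets (SimpleGraph.pathGraph n) i := hTcard.symm
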